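/- The inequality (1−p)·(sinh x)/x + p·(tanh x)/x > 1 holds for all x > 0 if and only if p ≤ 1/3, and the inequality 1 > (1−q)·(sinh x)/x + q·(tanh x)/x holds for all x > 0 if and only if q ≥ 1. -/

import Mathlib

open Real

-- tanh x < x for x > 0, and other basics
lemma tanh_lt_self' {x : ℝ} (hx : 0 < x) : Real.tanh x < x := by
  rw [Real.tanh_eq_sinh_div_cosh, div_lt_iff₀ (Real.cosh_pos x)]
  have H : StrictMonoOn (fun y => y * Real.cosh y - Real.sinh y) (Set.Ici 0) := by
    apply strictMonoOn_of_deriv_pos (convex_Ici 0)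
    · have : Continuous (fun y => y * Real.cosh y - Real.sinh y) := by fun_prop
      exact this.continuousOn
    · intro y hy
      rw [interior_Ici, Set.mem_Ioi] at hy
      have hd : HasDerivAt (fun y => y * Real.cosh y - Real.sinh y)
          (1 * Real.cosh y + y * Real.sinh y - Real.cosh y) y :=
        ((hasDerivAt_id y).mul (Real.hasDerivAt_cosh y)).sub (Real.hasDerivAt_sinh y)
      rw [hd.deriv]
      have := Real.sinh_pos_iff.2 hy
      nlinarith
  have := H Set.self_mem_Ici (Set.mem_Ici.2 hx.le) hx
  simp only [Real.sinh_zero, Real.cosh_zero] at this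
  nlinarith

-- key: 2 sinh x + tanh x > 3 x  for x > 0
lemma key1 {x : ℝ} (hx : 0 < x) : 3 * x < 2 * Real.sinh x + Real.tanh x := by
  have H : StrictMonoOn (fun y => 2 * Real.sinh y + Real.tanh y - 3 * y) (Set.Ici 0) := by
    apply strictMonoOn_of_deriv_pos (convex_Ici 0)
    · have : Continuous (fun y => 2 * Real.sinh y + Real.tanh y - 3 * y) := by
        have ht : Continuous Real.tanh := by
          have : Real.tanh = fun y => Real.sinh y / Real.cosh y :=
            funext fun y => Real.tanh_eq_sinh_div_cosh y
          rw [this]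
          exact Real.continuous_sinh.div Real.continuous_cosh fun y => (Real.cosh_pos y).ne'
        fun_prop
      exact this.continuousOn
    · intro y hy
      rw [interior_Ici, Set.mem_Ioi] at hy
      have hc := Real.cosh_pos y
      have hc1 : 1 < Real.cosh y := Real.one_lt_cosh.2 (ne_of_gt hy)
      have hd : HasDerivAt (fun y => 2 * Real.sinh y + Real.tanh y - 3 * y)
          (2 * Real.cosh y + ((Real.cosh y * Real.cosh y - Real.sinh y * Real.sinh y) / Real.cosh y ^ 2) - 3) y := by
        have htanh : HasDerivAt Real.tanh
            ((Real.cosh y * Real.cosh y - Real.sinh y * Real.sinh y) / Real.cosh y ^ 2) y := by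
          have : Real.tanh = fun y => Real.sinh y / Real.cosh y :=
            funext fun y => Real.tanh_eq_sinh_div_cosh y
          rw [this]
          exact (Real.hasDerivAt_sinh y).div (Real.hasDerivAt_cosh y) (Real.cosh_pos y).ne'
        have h3 : HasDerivAt (fun y : ℝ => 3 * y) 3 y := by
          simpa using (hasDerivAt_id y).const_mul (3:ℝ)
        exact (((Real.hasDerivAt_sinh y).const_mul 2).add htanh).sub h3
      rw [hd.deriv]
      have hcs : Real.cosh y * Real.cosh y - Real.sinh y * Real.sinh y = 1 := by
        have := Real.cosh_sq_sub_sinh_sq y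
        nlinarith [this]
      rw [hcs]
      have h2 : 3 - 2 * Real.cosh y < 1 / Real.cosh y ^ 2 := by
        rw [lt_div_iff₀ (by positivity)]
        nlinarith [mul_pos (mul_pos (sub_pos.2 hc1) (sub_pos.2 hc1)) (by linarith : (0:ℝ) < 2 * Real.cosh y + 1)]
      linarith
  have := H Set.self_mem_Ici (Set.mem_Ici.2 hx.le) hx
  simp only [Real.sinh_zero, Real.tanh_zero] at this
  linarith

-- upper bounds from exp_bound with n = 4
lemma exp_ub {x : ℝ} (h : |x| ≤ 1) :
    |Real.exp x - (1 + x + x^2/2 + x^3/6)| ≤ |x|^4 / 6 := by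
  have := Real.exp_bound h (n := 4) (by norm_num)
  have hs : (∑ i ∈ Finset.range 4, x ^ i / (Nat.factorial i : ℝ)) = 1 + x + x^2/2 + x^3/6 := by
    norm_num [Finset.sum_range_succ, Nat.factorial]
    try ring
  rw [hs] at this
  refine this.trans ?_
  have h4 : ((Nat.succ 4 : ℕ) : ℝ) / ((Nat.factorial 4 : ℕ) * (4:ℕ)) = 5/96 := by
    norm_num [Nat.factorial]
  rw [h4]
  nlinarith [pow_nonneg (abs_nonneg x) 4]

lemma sinh_ub {x : ℝ} (h0 : 0 ≤ x) (h1 : x ≤ 1) :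
    Real.sinh x ≤ x + x^3/6 + x^4/6 := by
  have ha : |x| ≤ 1 := by rw [abs_of_nonneg h0]; exact h1
  have hb : |(-x)| ≤ 1 := by rwa [abs_neg]
  have e1 := abs_le.1 (exp_ub ha)
  have e2 := abs_le.1 (exp_ub hb)
  rw [Real.sinh_eq]
  rw [abs_of_nonneg h0] at e1
  rw [abs_neg, abs_of_nonneg h0] at e2
  nlinarith [e1.1, e1.2, e2.1, e2.2]

lemma cosh_ub {x : ℝ} (h0 : 0 ≤ x) (h1 : x ≤ 1) :
    Real.cosh x ≤ 1 + x^2/2 + x^4/6 := by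
  have ha : |x| ≤ 1 := by rw [abs_of_nonneg h0]; exact h1
  have hb : |(-x)| ≤ 1 := by rwa [abs_neg]
  have e1 := abs_le.1 (exp_ub ha)
  have e2 := abs_le.1 (exp_ub hb)
  rw [Real.cosh_eq]
  rw [abs_of_nonneg h0] at e1
  rw [abs_neg, abs_of_nonneg h0] at e2
  nlinarith [e1.1, e1.2, e2.1, e2.2]

lemma cosh_lb (x : ℝ) (h0 : 0 ≤ x) : 1 + x^2/2 ≤ Real.cosh x := by
  have h := Real.cosh_two_mul (x/2)
  have hx2 : 2 * (x/2) = x := by ring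
  rw [hx2] at h
  have hs : x/2 ≤ Real.sinh (x/2) := by
    rcases eq_or_lt_of_le h0 with h|h
    · simp [← h]
    · exact (Real.self_lt_sinh_iff.2 (by linarith)).le
  have hc := Real.cosh_sq (x/2)
  nlinarith [Real.cosh_pos (x/2)]

theorem huygens_type_hyperbolic (p q : ℝ) :
    ((∀ x : ℝ, 0 < x →
      (1 - p) * Real.sinh x / x + p * Real.tanh x / x > 1) ↔ p ≤ 1 / 3) ∧
    ((∀ x : ℝ, 0 < x →
      1 > (1 - q) * Real.sinh x / x + q * Real.tanh x / x) ↔ q ≥ 1) := by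
  constructor
  · constructor
    · -- forward: if ∀, then p ≤ 1/3
      intro h
      by_contra hp
      push_neg at hp  -- 1/3 < p
      set x : ℝ := min (1/2) ((3*p-1)/2) with hxdef
      have hx0 : 0 < x := lt_min (by norm_num) (by linarith)
      have hxh : x ≤ 1/2 := min_le_left _ _
      have hxp : (2*x+1)/3 ≤ p := by
        have : x ≤ (3*p-1)/2 := min_le_right _ _
        linarith
      have hs := sinh_ub hx0.le (by linarith)
      have hcub := cosh_ub hx0.le (by linarith)
      have hclb := cosh_lb x hx0.le
      have hslb : x ≤ Real.sinh x := (Real.self_lt_sinh_iff.2 hx0).le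
      have hc := Real.cosh_pos x
      have H := h x hx0
      rw [gt_iff_lt, ← add_div, lt_div_iff₀ hx0] at H
      -- H : 1 * x < (1-p) * sinh x + p * tanh x
      rw [Real.tanh_eq_sinh_div_cosh] at H
      set s := Real.sinh x
      set c := Real.cosh x
      have H2 : x * c < (1-p) * s * c + p * s := by
        have := (mul_lt_mul_of_pos_right H hc)
        have hps : p * (s / c) * c = p * s := by field_simp
        nlinarith [this]
      -- derive contradiction: (1-p) s c + p s ≤ x c
      have hkey : (1-p) * s * c + p * s ≤ x * c := by
        have h1 : c * (s - x) ≤ (1 + x^2/2 + x^4/6) * (x^3/6 + x^4/6) :=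
          mul_le_mul hcub (by linarith) (by linarith) (by positivity)
        have h2 : ((2*x+1)/3) * (x * (x^2/2)) ≤ p * (s * (c - 1)) := by
          apply mul_le_mul hxp _ (by positivity) (by linarith)
          exact mul_le_mul hslb (by linarith) (by positivity) (by linarith)
        have h3 : (1 + x^2/2 + x^4/6) * (x^3/6 + x^4/6) ≤ ((2*x+1)/3) * (x * (x^2/2)) := by
          nlinarith [pow_pos hx0 4, pow_pos hx0 3, pow_pos hx0 5, pow_pos hx0 6,
            mul_nonneg (pow_nonneg hx0.le 4) (by linarith : (0:ℝ) ≤ 1/2 - x),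
            mul_nonneg (pow_nonneg hx0.le 5) (by linarith : (0:ℝ) ≤ 1/2 - x),
            mul_nonneg (pow_nonneg hx0.le 6) (by linarith : (0:ℝ) ≤ 1/2 - x),
            mul_nonneg (pow_nonneg hx0.le 7) (by linarith : (0:ℝ) ≤ 1/2 - x)]
        nlinarith [h1, h2, h3]
      linarith
    · -- backward: p ≤ 1/3 ⇒ ∀
      intro hp x hx
      have hk := key1 hx
      have hc1 : 1 < Real.cosh x := Real.one_lt_cosh.2 (ne_of_gt hx)
      have hs0 : 0 < Real.sinh x := Real.sinh_pos_iff.2 hx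
      have hts : Real.tanh x < Real.sinh x := by
        rw [Real.tanh_eq_sinh_div_cosh, div_lt_iff₀ (by linarith)]
        nlinarith
      rw [gt_iff_lt, ← add_div, lt_div_iff₀ hx]
      nlinarith [mul_nonneg (by linarith : (0:ℝ) ≤ 1/3 - p) (by linarith : (0:ℝ) ≤ Real.sinh x - Real.tanh x)]
  · constructor
    · -- forward: if ∀, then q ≥ 1
      intro h
      by_contra hq
      push_neg at hq  -- q < 1
      set x : ℝ := 8 * (1 + |q|) / (1 - q) with hxdef
      have h1q : 0 < 1 - q := by linarith
      have hx0 : 0 < x := by positivity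
      have H := h x hx0
      rw [gt_iff_lt, ← add_div, div_lt_one hx0] at H
      -- H : (1-q) * sinh x + q * tanh x < x
      have hslb : x/2 + x^2/8 < Real.sinh x := by
        rw [Real.sinh_eq]
        have he1 : Real.exp (-x) < 1 := Real.exp_lt_one_iff.2 (by linarith)
        have he2 : (1 + x/2)^2 ≤ Real.exp x := by
          have h3 : Real.exp x = Real.exp (x/2) * Real.exp (x/2) := by
            rw [← Real.exp_add]; ring_nf
          rw [h3]
          have h4 : x/2 + 1 ≤ Real.exp (x/2) := Real.add_one_le_exp _
          nlinarith [Real.exp_pos (x/2)]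
        nlinarith
      have htlt : Real.tanh x < x := tanh_lt_self' hx0
      have ht0 : 0 < Real.tanh x := by
        rw [Real.tanh_eq_sinh_div_cosh]
        exact div_pos (Real.sinh_pos_iff.2 hx0) (Real.cosh_pos x)
      have hqt : -(|q| * x) ≤ q * Real.tanh x := by
        have : |q * Real.tanh x| ≤ |q| * x := by
          rw [abs_mul]
          exact mul_le_mul_of_nonneg_left (by rw [abs_of_pos ht0]; linarith) (abs_nonneg q)
        linarith [(abs_le.1 this).1]
      have hxineq : (1 - q) * x = 8 * (1 + |q|) := by
        rw [hxdef]; field_simp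
      have h5 : (1-q) * (x^2/8) = (1+|q|) * x := by
        linear_combination (x/8) * hxineq
      nlinarith [mul_lt_mul_of_pos_left hslb h1q, abs_nonneg q]
    · -- backward: q ≥ 1 ⇒ ∀
      intro hq x hx
      have hts : Real.tanh x < Real.sinh x := by
        have hc1 : 1 < Real.cosh x := Real.one_lt_cosh.2 (ne_of_gt hx)
        have hs0 : 0 < Real.sinh x := Real.sinh_pos_iff.2 hx
        rw [Real.tanh_eq_sinh_div_cosh, div_lt_iff₀ (by linarith)]
        nlinarith
      have htlt : Real.tanh x < x := tanh_lt_self' hx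
      rw [gt_iff_lt, ← add_div, div_lt_one hx]
      nlinarith [mul_nonneg (by linarith : (0:ℝ) ≤ q - 1) (by linarith : (0:ℝ) ≤ Real.sinh x - Real.tanh x)]
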